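/- arXiv:1306.2405 — 9 statements merged into one kernel-verified Lean document; each statement's English description precedes it below -/
import Mathlib

section
/- Let f be an edge enumerator. For all edge-coloured graphs G and G', one has G ≅ G' if and only if the set of relabelled graphs { α(G) | v ∈ V_G, f(G,v) = (◁,α) } obtained by running f from every vertex of G equals the corresponding set { α'(G') | v' ∈ V_{G'}, f(G',v') = (◁',α') } obtained from every vertex of G'. -/
/-- An edge-coloured (multi)graph on vertex set `Fin n`: `col v w` is the set of
colours of directed edges from `v` to `w`. -/
structure ColGraph (C : Type) where
  n : ℕ
  col : Fin n → Fin n → Set C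

namespace ColGraph

variable {C : Type}

/-- The rigidity condition: for each vertex, distinct outgoing edges have distinct
colours and distinct incoming edges have distinct colours. -/
def Rigid (G : ColGraph C) : Prop :=
  (∀ (v w w' : Fin G.n) (c : C), c ∈ G.col v w → c ∈ G.col v w' → w = w') ∧
  (∀ (v w w' : Fin G.n) (c : C), c ∈ G.col w v → c ∈ G.col w' v → w = w')

/-- `φ` is an isomorphism of edge-coloured graphs from `G` to `G'`. -/
def IsIso (G G' : ColGraph C) (φ : Fin G.n ≃ Fin G'.n) : Prop :=
  ∀ v w : Fin G.n, G'.col (φ v) (φ w) = G.col v w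

/-- `G ≅ G'`. -/
def Iso (G G' : ColGraph C) : Prop := ∃ φ : Fin G.n ≃ Fin G'.n, IsIso G G' φ

/-- `(G,v) ≅ (G',v')`. -/
def IsoPt (G : ColGraph C) (v : Fin G.n) (G' : ColGraph C) (v' : Fin G'.n) : Prop :=
  ∃ φ : Fin G.n ≃ Fin G'.n, IsIso G G' φ ∧ φ v = v'

/-- The relabelled graph `α(G)`. -/
def relabel (G : ColGraph C) (α : Fin G.n ≃ Fin G.n) : ColGraph C where
  n := G.n
  col v w := G.col (α.symm v) (α.symm w)

/-- The DFA state set `S_G = V_G ∪ {⊥_v | v ∈ V_G}`: `Sum.inl v` is the vertex `v`,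
`Sum.inr v` is the sink state `⊥_v`. -/
abbrev State (G : ColGraph C) : Type := Fin G.n ⊕ Fin G.n

/-- Symbols: `Sum.inl c` is the colour `c`, `Sum.inr c` is the reverse colour `c⁻`. -/
abbrev Sym (C : Type) : Type := C ⊕ C

/-- Membership in the alphabet `Σ_G = C_G ∪ {c⁻ | c ∈ C_G}`, where `C_G` is the set of
colours of edges of `G`. -/
def InAlphabet (G : ColGraph C) : Sym C → Prop
  | Sum.inl c => ∃ v w, c ∈ G.col v w
  | Sum.inr c => ∃ v w, c ∈ G.col v w

open scoped Classical in
/-- The transition function `δ_G : S_G × Σ_G → S_G`. -/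
noncomputable def delta (G : ColGraph C) : State G → Sym C → State G
  | Sum.inl v, Sum.inl c =>
      if h : ∃ w, c ∈ G.col v w then Sum.inl h.choose else Sum.inr v
  | Sum.inl v, Sum.inr c =>
      if h : ∃ w, c ∈ G.col w v then Sum.inl h.choose else Sum.inr v
  | Sum.inr v, _ => Sum.inr v

/-- The extension `δ̂_G` of `δ_G` to words. -/
noncomputable def deltaHat (G : ColGraph C) (s : State G) (w : List (Sym C)) : State G :=
  w.foldl G.delta s

/-- Vertex bisimilarity `s ~_G s'`: for every word `w` over the alphabet `Σ_G`,
`δ̂_G(s,w) ∈ V_G ↔ δ̂_G(s',w) ∈ V_G`. -/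
def Bisim (G : ColGraph C) (s s' : State G) : Prop :=
  ∀ w : List (Sym C), (∀ x ∈ w, G.InAlphabet x) →
    ((G.deltaHat s w).isLeft = true ↔ (G.deltaHat s' w).isLeft = true)

/-- The underlying undirected (simple) graph of `G`. -/
def toSimple (G : ColGraph C) : SimpleGraph (Fin G.n) :=
  SimpleGraph.fromRel fun v w => (G.col v w).Nonempty

end ColGraph

/-- An edge enumerator: for each graph `G` and start vertex `v` it produces a total
order on the edges of `G` (represented as the duplicate-free list `ord G v` of all
edges of `G` listed in increasing order) together with a bijective vertex renaming
`ren G v`, such that whenever `(G,v) ≅ (G',v')`, the relabelled graphs agree and the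
renamed sorted lists of coloured edges agree. -/
structure EdgeEnumerator (C : Type) where
  ord : (G : ColGraph C) → Fin G.n → List (Fin G.n × Fin G.n)
  ren : (G : ColGraph C) → Fin G.n → (Fin G.n ≃ Fin G.n)
  ord_nodup : ∀ (G : ColGraph C) (v : Fin G.n), (ord G v).Nodup
  ord_mem : ∀ (G : ColGraph C) (v : Fin G.n) (e : Fin G.n × Fin G.n),
      e ∈ ord G v ↔ (G.col e.1 e.2).Nonempty
  invariant : ∀ (G G' : ColGraph C), G.Rigid → G'.Rigid →
      ∀ (v : Fin G.n) (v' : Fin G'.n), ColGraph.IsoPt G v G' v' →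
      ColGraph.relabel G (ren G v) = ColGraph.relabel G' (ren G' v') ∧
      (ord G v).map (fun e => (((ren G v e.1 : ℕ), (ren G v e.2 : ℕ)), G.col e.1 e.2))
        = (ord G' v').map
            (fun e => (((ren G' v' e.1 : ℕ), (ren G' v' e.2 : ℕ)), G'.col e.1 e.2))


lemma iso_relabel_aux {C : Type} (G : ColGraph C) (α : Fin G.n ≃ Fin G.n) :
    ColGraph.Iso G (ColGraph.relabel G α) :=
  ⟨α, fun v w => by simp [ColGraph.relabel, ColGraph.IsIso]; exact congrArg₂ G.col (α.symm_apply_apply v) (α.symm_apply_apply w)⟩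

lemma iso_symm_aux {C : Type} {G G' : ColGraph C} (h : ColGraph.Iso G G') :
    ColGraph.Iso G' G := by
  obtain ⟨φ, hφ⟩ := h
  exact ⟨φ.symm, fun v w => by
    have := hφ (φ.symm v) (φ.symm w); simpa using this.symm⟩

lemma iso_trans_aux {C : Type} {G₁ G₂ G₃ : ColGraph C}
    (h : ColGraph.Iso G₁ G₂) (h' : ColGraph.Iso G₂ G₃) : ColGraph.Iso G₁ G₃ := by
  obtain ⟨φ, hφ⟩ := h; obtain ⟨ψ, hψ⟩ := h'
  exact ⟨φ.trans ψ, fun v w => by rw [Equiv.trans_apply, Equiv.trans_apply, hψ, hφ]⟩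

lemma iso_of_eq_aux {C : Type} {A B : ColGraph C} (h : A = B) : ColGraph.Iso A B := by
  subst h; exact ⟨Equiv.refl _, fun v w => rfl⟩

theorem stmt_1 {C : Type} (f : EdgeEnumerator C) (G G' : ColGraph C)
    (hG : G.Rigid) (hG' : G'.Rigid) :
    ColGraph.Iso G G' ↔
      (Set.range fun v : Fin G.n => ColGraph.relabel G (f.ren G v)) =
        (Set.range fun v' : Fin G'.n => ColGraph.relabel G' (f.ren G' v')) := by
  constructor
  · rintro ⟨φ, hφ⟩
    apply Set.eq_of_subset_of_subset
    · rintro _ ⟨v, rfl⟩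
      exact ⟨φ v, ((f.invariant G G' hG hG' v (φ v) ⟨φ, hφ, rfl⟩).1).symm⟩
    · rintro _ ⟨v', rfl⟩
      exact ⟨φ.symm v',
        (f.invariant G G' hG hG' (φ.symm v') v' ⟨φ, hφ, φ.apply_symm_apply v'⟩).1⟩
  · intro h
    by_cases hn : G.n = 0
    · have hn' : G'.n = 0 := by
        by_contra h0
        have v' : Fin G'.n := ⟨0, Nat.pos_of_ne_zero h0⟩
        have hm : ColGraph.relabel G' (f.ren G' v') ∈
            Set.range fun v : Fin G.n => ColGraph.relabel G (f.ren G v) := by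
          rw [h]; exact ⟨v', rfl⟩
        obtain ⟨v, -⟩ := hm
        exact absurd v.2 (by omega)
      exact ⟨finCongr (hn.trans hn'.symm), fun v _ => absurd v.2 (by omega)⟩
    · have v : Fin G.n := ⟨0, Nat.pos_of_ne_zero hn⟩
      have hm : ColGraph.relabel G (f.ren G v) ∈
          Set.range fun v' : Fin G'.n => ColGraph.relabel G' (f.ren G' v') := by
        rw [← h]; exact ⟨v, rfl⟩
      obtain ⟨v', heq⟩ := hm
      exact iso_trans_aux (iso_relabel_aux G (f.ren G v))
        (iso_trans_aux (iso_of_eq_aux heq.symm)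
          (iso_symm_aux (iso_relabel_aux G' (f.ren G' v'))))
end

section
/- Let G be an edge-coloured graph, let P and Q be equivalence classes of the state set S_G under the vertex-bisimilarity relation ~_G, and let x ∈ Σ_G. Suppose some s ∈ P satisfies δ_G(s,x) ∈ Q and δ_G(s,x) ∈ V_G. Then P ⊆ V_G, every s' ∈ P satisfies δ_G(s',x) ∈ Q ∩ V_G, the map s' ↦ δ_G(s',x) is injective on P, and hence |P| ≤ |Q|. -/
theorem stmt_5 {C : Type} (G : ColGraph C) (hG : G.Rigid)
    (P Q : Set (ColGraph.State G))
    (hP : ∃ s₀ : ColGraph.State G, P = {t | G.Bisim s₀ t})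
    (hQ : ∃ s₀ : ColGraph.State G, Q = {t | G.Bisim s₀ t})
    (x : ColGraph.Sym C) (hx : G.InAlphabet x)
    (s : ColGraph.State G) (hs : s ∈ P)
    (hsQ : G.delta s x ∈ Q) (hsV : (G.delta s x).isLeft = true) :
    (∀ t ∈ P, t.isLeft = true) ∧
    (∀ t ∈ P, G.delta t x ∈ Q ∧ (G.delta t x).isLeft = true) ∧
    Set.InjOn (fun t => G.delta t x) P ∧
    P.ncard ≤ Q.ncard := by
  obtain ⟨p₀, rfl⟩ := hP
  obtain ⟨q₀, rfl⟩ := hQ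
  have hsleft : s.isLeft = true := by
    cases s with
    | inl v => rfl
    | inr v => simp [ColGraph.delta] at hsV
  have hbst : ∀ t ∈ {t | G.Bisim p₀ t}, G.Bisim s t := by
    intro t ht w hw
    exact (hs w hw).symm.trans (ht w hw)
  have hleft : ∀ t ∈ {t | G.Bisim p₀ t}, t.isLeft = true := by
    intro t ht
    have h := hbst t ht [] (by simp)
    simp only [ColGraph.deltaHat, List.foldl_nil] at h
    exact h.mp hsleft
  have hstep : ∀ t, G.Bisim s t → G.Bisim (G.delta s x) (G.delta t x) := by
    intro t ht w hw
    have h := ht (x :: w) (by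
      intro y hy
      rcases List.mem_cons.mp hy with h | h
      · subst h; exact hx
      · exact hw y h)
    simpa [ColGraph.deltaHat] using h
  have hQleft : ∀ t ∈ {t | G.Bisim p₀ t},
      G.delta t x ∈ {t | G.Bisim q₀ t} ∧ (G.delta t x).isLeft = true := by
    intro t ht
    have hb := hstep t (hbst t ht)
    constructor
    · intro w hw
      exact (hsQ w hw).trans (hb w hw)
    · have h := hb [] (by simp)
      simp only [ColGraph.deltaHat, List.foldl_nil] at h
      exact h.mp hsV
  have hinj : Set.InjOn (fun t => G.delta t x) {t | G.Bisim p₀ t} := by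
    intro t ht t' ht' heq
    obtain ⟨v, rfl⟩ := Sum.isLeft_iff.mp (hleft t ht)
    obtain ⟨v', rfl⟩ := Sum.isLeft_iff.mp (hleft t' ht')
    have hl := (hQleft _ ht).2
    have hl' := (hQleft _ ht').2
    simp only at heq
    cases x with
    | inl c =>
      simp only [ColGraph.delta] at heq hl hl'
      split at hl
      case isTrue h =>
        split at hl'
        case isTrue h' =>
          simp only [dif_pos h, dif_pos h'] at heq
          have hw : h.choose = h'.choose := by simpa using heq
          have hc' : c ∈ G.col v' h.choose := by rw [hw]; exact h'.choose_spec
          have h2 := hG.2 h.choose v v' c h.choose_spec hc'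
          exact congrArg Sum.inl h2
        case isFalse h' => simp at hl'
      case isFalse h => simp at hl
    | inr c =>
      simp only [ColGraph.delta] at heq hl hl'
      split at hl
      case isTrue h =>
        split at hl'
        case isTrue h' =>
          simp only [dif_pos h, dif_pos h'] at heq
          have hw : h.choose = h'.choose := by simpa using heq
          have hc' : c ∈ G.col h.choose v' := by rw [hw]; exact h'.choose_spec
          have h2 := hG.1 h.choose v v' c h.choose_spec hc'
          exact congrArg Sum.inl h2
        case isFalse h' => simp at hl'
      case isFalse h => simp at hl
  refine ⟨hleft, hQleft, hinj, ?_⟩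
  exact Set.ncard_le_ncard_of_injOn _ (fun t ht => (hQleft t ht).1) hinj (Set.toFinite _)
end

section
/- Let G be a connected edge-coloured graph. Then any two equivalence classes P and Q of the vertex set V_G under the vertex-bisimilarity relation ~_G have the same cardinality: |P| = |Q|. -/
namespace ColGraph

variable {C : Type} (G : ColGraph C)

lemma deltaHat_cons' (s : G.State) (x : Sym C) (w : List (Sym C)) :
    G.deltaHat s (x :: w) = G.deltaHat (G.delta s x) w := rfl

lemma deltaHat_append' (s : G.State) (w₁ w₂ : List (Sym C)) :
    G.deltaHat s (w₁ ++ w₂) = G.deltaHat (G.deltaHat s w₁) w₂ :=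
  List.foldl_append

lemma delta_inr' (v : Fin G.n) (x : Sym C) : G.delta (Sum.inr v) x = Sum.inr v := by
  cases x <;> rfl

lemma deltaHat_inr' (v : Fin G.n) (w : List (Sym C)) :
    G.deltaHat (Sum.inr v) w = Sum.inr v := by
  induction w with
  | nil => rfl
  | cons x w ih => rw [deltaHat_cons', delta_inr']; exact ih

open scoped Classical in
lemma delta_inl_inl_eq (u : Fin G.n) (c : C) :
    G.delta (Sum.inl u) (Sum.inl c) =
      if h : ∃ w, c ∈ G.col u w then Sum.inl h.choose else Sum.inr u := rfl

open scoped Classical in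
lemma delta_inl_inr_eq (u : Fin G.n) (c : C) :
    G.delta (Sum.inl u) (Sum.inr c) =
      if h : ∃ w, c ∈ G.col w u then Sum.inl h.choose else Sum.inr u := rfl

lemma mem_of_delta_inl_inl {u v : Fin G.n} {c : C}
    (h : G.delta (Sum.inl u) (Sum.inl c) = Sum.inl v) : c ∈ G.col u v := by
  rw [delta_inl_inl_eq] at h
  split at h
  · next he =>
      have := he.choose_spec
      rw [Sum.inl.injEq] at h
      rwa [h] at this
  · exact absurd h (by simp)

lemma mem_of_delta_inl_inr {u v : Fin G.n} {c : C}
    (h : G.delta (Sum.inl u) (Sum.inr c) = Sum.inl v) : c ∈ G.col v u := by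
  rw [delta_inl_inr_eq] at h
  split at h
  · next he =>
      have := he.choose_spec
      rw [Sum.inl.injEq] at h
      rwa [h] at this
  · exact absurd h (by simp)

lemma delta_inl_of_mem (hG : G.Rigid) {u v : Fin G.n} {c : C} (hc : c ∈ G.col u v) :
    G.delta (Sum.inl u) (Sum.inl c) = Sum.inl v := by
  rw [delta_inl_inl_eq]
  split
  · next he => exact congrArg Sum.inl (hG.1 u _ v c he.choose_spec hc)
  · next he => exact absurd ⟨v, hc⟩ he

lemma delta_inr_of_mem (hG : G.Rigid) {u v : Fin G.n} {c : C} (hc : c ∈ G.col v u) :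
    G.delta (Sum.inl u) (Sum.inr c) = Sum.inl v := by
  rw [delta_inl_inr_eq]
  split
  · next he => exact congrArg Sum.inl (hG.2 u _ v c he.choose_spec hc)
  · next he => exact absurd ⟨v, hc⟩ he

lemma delta_inj (hG : G.Rigid) {s s' : G.State} {x : Sym C} {v : Fin G.n}
    (h : G.delta s x = Sum.inl v) (h' : G.delta s' x = Sum.inl v) : s = s' := by
  cases s with
  | inr u => rw [delta_inr'] at h; exact absurd h (by simp)
  | inl u =>
    cases s' with
    | inr u' => rw [delta_inr'] at h'; exact absurd h' (by simp)
    | inl u' =>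
      cases x with
      | inl c =>
          exact congrArg Sum.inl
            (hG.2 v u u' c (G.mem_of_delta_inl_inl h) (G.mem_of_delta_inl_inl h'))
      | inr c =>
          exact congrArg Sum.inl
            (hG.1 v u u' c (G.mem_of_delta_inl_inr h) (G.mem_of_delta_inl_inr h'))

lemma deltaHat_inj (hG : G.Rigid) {s s' : G.State} {w : List (Sym C)} {v : Fin G.n}
    (h : G.deltaHat s w = Sum.inl v) (h' : G.deltaHat s' w = Sum.inl v) : s = s' := by
  induction w generalizing s s' with
  | nil => exact h.trans h'.symm
  | cons x w ih =>
    rw [deltaHat_cons'] at h h'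
    have heq := ih h h'
    cases hd : G.delta s x with
    | inr u =>
        rw [hd, deltaHat_inr'] at h
        exact absurd h (by simp)
    | inl u =>
        exact G.delta_inj hG hd (heq ▸ hd)

lemma exists_word (hG : G.Rigid) (hconn : G.toSimple.Connected) (u v : Fin G.n) :
    ∃ w : List (Sym C), (∀ x ∈ w, G.InAlphabet x) ∧
      G.deltaHat (Sum.inl u) w = Sum.inl v := by
  obtain ⟨walk⟩ := hconn.1 u v
  induction walk with
  | nil => exact ⟨[], by simp, rfl⟩
  | @cons a b c hadj p ih =>
    obtain ⟨w, hw, hdw⟩ := ih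
    rw [toSimple, SimpleGraph.fromRel_adj] at hadj
    rcases hadj.2 with ⟨col, hc⟩ | ⟨col, hc⟩
    · refine ⟨Sum.inl col :: w, ?_, ?_⟩
      · rintro x hx
        rcases List.mem_cons.1 hx with rfl | hx
        · exact ⟨a, b, hc⟩
        · exact hw x hx
      · rw [deltaHat_cons', G.delta_inl_of_mem hG hc]; exact hdw
    · refine ⟨Sum.inr col :: w, ?_, ?_⟩
      · rintro x hx
        rcases List.mem_cons.1 hx with rfl | hx
        · exact ⟨b, a, hc⟩
        · exact hw x hx
      · rw [deltaHat_cons', G.delta_inr_of_mem hG hc]; exact hdw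

lemma bisim_trans_word {u u' v v' : Fin G.n} (hb : G.Bisim (Sum.inl u) (Sum.inl u'))
    {w : List (Sym C)} (hw : ∀ x ∈ w, G.InAlphabet x)
    (h1 : G.deltaHat (Sum.inl u) w = Sum.inl v)
    (h2 : G.deltaHat (Sum.inl u') w = Sum.inl v') :
    G.Bisim (Sum.inl v) (Sum.inl v') := by
  intro z hz
  have := hb (w ++ z) (by
    intro x hx
    rcases List.mem_append.1 hx with h | h
    exacts [hw x h, hz x h])
  rwa [deltaHat_append', deltaHat_append', h1, h2] at this

lemma ncard_class_le (hG : G.Rigid) (hconn : G.toSimple.Connected) (p q : Fin G.n) :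
    {v | G.Bisim (Sum.inl p) (Sum.inl v)}.ncard ≤
      {v | G.Bisim (Sum.inl q) (Sum.inl v)}.ncard := by
  classical
  obtain ⟨w, hw, hdw⟩ := G.exists_word hG hconn p q
  set f : Fin G.n → Fin G.n := fun v =>
    if h : ∃ v', G.deltaHat (Sum.inl v) w = Sum.inl v' then h.choose else v with hf
  have hmem : ∀ v, G.Bisim (Sum.inl p) (Sum.inl v) →
      G.deltaHat (Sum.inl v) w = Sum.inl (f v) ∧
        G.Bisim (Sum.inl q) (Sum.inl (f v)) := by
    intro v hv
    have hL : (G.deltaHat (Sum.inl v) w).isLeft = true := by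
      have := (hv w hw).1
      rw [hdw] at this
      exact this rfl
    obtain ⟨v', hv'⟩ := Sum.isLeft_iff.1 hL
    have hex : ∃ x, G.deltaHat (Sum.inl v) w = Sum.inl x := ⟨v', hv'⟩
    have hfv : G.deltaHat (Sum.inl v) w = Sum.inl (f v) := by
      rw [hf]
      simp only [dif_pos hex]
      exact hex.choose_spec
    exact ⟨hfv, G.bisim_trans_word hv hw hdw hfv⟩
  apply Set.ncard_le_ncard_of_injOn f
  · intro v hv; exact (hmem v hv).2
  · intro v hv v' hv' hvv'
    have h1 := (hmem v hv).1
    have h2 := (hmem v' hv').1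
    rw [hvv'] at h1
    exact Sum.inl_injective (G.deltaHat_inj hG h1 h2)

end ColGraph

theorem stmt_6 {C : Type} (G : ColGraph C) (hG : G.Rigid)
    (hconn : (ColGraph.toSimple G).Connected)
    (P Q : Set (Fin G.n))
    (hP : ∃ v₀ : Fin G.n, P = {v | G.Bisim (Sum.inl v₀) (Sum.inl v)})
    (hQ : ∃ v₀ : Fin G.n, Q = {v | G.Bisim (Sum.inl v₀) (Sum.inl v)}) :
    P.ncard = Q.ncard := by
  obtain ⟨p, rfl⟩ := hP
  obtain ⟨q, rfl⟩ := hQ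
  exact le_antisymm (G.ncard_class_le hG hconn p q) (G.ncard_class_le hG hconn q p)
end

section
/- There exists a connected edge-coloured graph G with at least two vertices in which all vertices are pairwise vertex-bisimilar (V_G/~_G consists of a single class) but not all vertices are pairwise related by automorphisms of G (the partition of V_G into automorphism orbits has at least two classes). A witness is the graph on vertices {1,2,3,4} with two colours b and r, b-coloured edges (1,2), (2,4), (4,3), (3,1) and r-coloured edges (1,2), (2,1), (3,4), (4,3). -/
/-- The witness graph: vertices `{1,2,3,4}` (here `0,1,2,3 : Fin 4`), with colour
`b = true` on the edges `(1,2), (2,4), (4,3), (3,1)` and colour `r = false` on the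
edges `(1,2), (2,1), (3,4), (4,3)`. -/
def witness : ColGraph Bool where
  n := 4
  col v w :=
    (if (v, w) ∈ ({(0, 1), (1, 3), (3, 2), (2, 0)} : Finset (Fin 4 × Fin 4)) then
        {true} else ∅) ∪
    (if (v, w) ∈ ({(0, 1), (1, 0), (2, 3), (3, 2)} : Finset (Fin 4 × Fin 4)) then
        {false} else ∅)

section Aux

open ColGraph

lemma memCol (v w : Fin 4) (c : Bool) :
    c ∈ witness.col v w ↔
      ((v, w) ∈ ({(0, 1), (1, 3), (3, 2), (2, 0)} : Finset (Fin 4 × Fin 4)) ∧ c = true) ∨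
      ((v, w) ∈ ({(0, 1), (1, 0), (2, 3), (3, 2)} : Finset (Fin 4 × Fin 4)) ∧ c = false) := by
  show c ∈ (if _ then _ else _) ∪ (if _ then _ else _) ↔ _
  simp only [Set.mem_union]
  split_ifs <;> simp_all

lemma exOut : ∀ (v : Fin 4) (c : Bool), ∃ w, c ∈ witness.col v w := by
  have h : ∀ (v : Fin 4) (c : Bool), ∃ w : Fin 4,
      ((v, w) ∈ ({(0, 1), (1, 3), (3, 2), (2, 0)} : Finset (Fin 4 × Fin 4)) ∧ c = true) ∨ ((v, w) ∈ ({(0, 1), (1, 0), (2, 3), (3, 2)} : Finset (Fin 4 × Fin 4)) ∧ c = false) := by decide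
  exact fun v c => (h v c).imp fun w hw => (memCol v w c).mpr hw

lemma exIn : ∀ (v : Fin 4) (c : Bool), ∃ w, c ∈ witness.col w v := by
  have h : ∀ (v : Fin 4) (c : Bool), ∃ w : Fin 4,
      ((w, v) ∈ ({(0, 1), (1, 3), (3, 2), (2, 0)} : Finset (Fin 4 × Fin 4)) ∧ c = true) ∨ ((w, v) ∈ ({(0, 1), (1, 0), (2, 3), (3, 2)} : Finset (Fin 4 × Fin 4)) ∧ c = false) := by decide
  exact fun v c => (h v c).imp fun w hw => (memCol w v c).mpr hw

lemma delta_left (v : Fin 4) (x : Sym Bool) :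
    ∃ u, witness.delta (Sum.inl v) x = Sum.inl u := by
  classical
  cases x with
  | inl c =>
      refine ⟨(exOut v c).choose, ?_⟩
      show (if h : ∃ w, c ∈ witness.col v w then Sum.inl h.choose else Sum.inr v) = _
      rw [dif_pos (exOut v c)]
      rfl
  | inr c =>
      refine ⟨(exIn v c).choose, ?_⟩
      show (if h : ∃ w, c ∈ witness.col w v then Sum.inl h.choose else Sum.inr v) = _
      rw [dif_pos (exIn v c)]
      rfl

lemma preconn : ∀ u v : Fin 4, (ColGraph.toSimple witness).Reachable u v := by
  have adj : ∀ a b : Fin 4, true ∈ witness.col a b → (ColGraph.toSimple witness).Adj a b := by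
    intro a b hab
    refine (SimpleGraph.fromRel_adj _ a b).mpr ?_
    refine ⟨?_, Or.inl ⟨true, hab⟩⟩
    rintro rfl
    rw [memCol] at hab
    revert hab; revert a; decide
  have r01 := (adj 0 1 ((memCol 0 1 true).mpr (by decide))).reachable
  have r13 := (adj 1 3 ((memCol 1 3 true).mpr (by decide))).reachable
  have r32 := (adj 3 2 ((memCol 3 2 true).mpr (by decide))).reachable
  have r20 := (adj 2 0 ((memCol 2 0 true).mpr (by decide))).reachable
  intro u v
  fin_cases u <;> fin_cases v <;>
    first
      | exact SimpleGraph.Reachable.refl _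
      | exact r01 | exact r01.symm
      | exact r13 | exact r13.symm
      | exact r32 | exact r32.symm
      | exact r20 | exact r20.symm
      | exact r01.trans r13
      | exact (r01.trans r13).symm
      | exact r13.trans r32
      | exact (r13.trans r32).symm
      | exact r32.trans r20
      | exact (r32.trans r20).symm
      | exact r20.trans r01
      | exact (r20.trans r01).symm

lemma deltaHat_left (w : List (Sym Bool)) :
    ∀ (v : Fin 4), ∃ u, witness.deltaHat (Sum.inl v) w = Sum.inl u := by
  induction w with
  | nil => exact fun v => ⟨v, rfl⟩
  | cons x xs ih =>
      intro v
      obtain ⟨u, hu⟩ := delta_left v x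
      show ∃ u', (x :: xs).foldl witness.delta (Sum.inl v) = Sum.inl u'
      rw [List.foldl_cons]
      exact hu ▸ ih u

end Aux

theorem stmt_7 :
    witness.Rigid ∧ 2 ≤ witness.n ∧ (ColGraph.toSimple witness).Connected ∧
    (∀ v w : Fin witness.n, witness.Bisim (Sum.inl v) (Sum.inl w)) ∧
    (∃ v w : Fin witness.n,
      ¬ ∃ φ : Fin witness.n ≃ Fin witness.n, ColGraph.IsIso witness witness φ ∧ φ v = w) := by
  refine ⟨⟨?_, ?_⟩, by decide, ?_, ?_, ?_⟩
  · intro v w w' c h1 h2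
    replace h1 := (memCol v w c).mp h1
    replace h2 := (memCol v w' c).mp h2
    revert h1 h2
    revert v w w' c
    show ∀ (v w w' : Fin 4) (c : Bool),
      ((v, w) ∈ ({(0, 1), (1, 3), (3, 2), (2, 0)} : Finset (Fin 4 × Fin 4)) ∧ c = true) ∨ ((v, w) ∈ ({(0, 1), (1, 0), (2, 3), (3, 2)} : Finset (Fin 4 × Fin 4)) ∧ c = false) →
      ((v, w') ∈ ({(0, 1), (1, 3), (3, 2), (2, 0)} : Finset (Fin 4 × Fin 4)) ∧ c = true) ∨ ((v, w') ∈ ({(0, 1), (1, 0), (2, 3), (3, 2)} : Finset (Fin 4 × Fin 4)) ∧ c = false) → w = w'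
    decide
  · intro v w w' c h1 h2
    replace h1 := (memCol w v c).mp h1
    replace h2 := (memCol w' v c).mp h2
    revert h1 h2
    revert v w w' c
    show ∀ (v w w' : Fin 4) (c : Bool),
      ((w, v) ∈ ({(0, 1), (1, 3), (3, 2), (2, 0)} : Finset (Fin 4 × Fin 4)) ∧ c = true) ∨ ((w, v) ∈ ({(0, 1), (1, 0), (2, 3), (3, 2)} : Finset (Fin 4 × Fin 4)) ∧ c = false) →
      ((w', v) ∈ ({(0, 1), (1, 3), (3, 2), (2, 0)} : Finset (Fin 4 × Fin 4)) ∧ c = true) ∨ ((w', v) ∈ ({(0, 1), (1, 0), (2, 3), (3, 2)} : Finset (Fin 4 × Fin 4)) ∧ c = false) → w = w'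
    decide
  · haveI : Nonempty (Fin witness.n) := ⟨(0 : Fin 4)⟩
    exact SimpleGraph.Connected.mk (fun u v => preconn u v)
  · intro v w l _
    obtain ⟨u1, h1⟩ := deltaHat_left l v
    obtain ⟨u2, h2⟩ := deltaHat_left l w
    rw [h1, h2]
    simp
  · refine ⟨(0 : Fin 4), (2 : Fin 4), ?_⟩
    rintro ⟨φ, hiso, hφ⟩
    have h := hiso (0 : Fin 4) (1 : Fin 4)
    rw [hφ] at h
    have ht : true ∈ witness.col (2 : Fin 4) (φ (1 : Fin 4)) := h.symm ▸ ((memCol 0 1 true).mpr (by decide))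
    have hf : false ∈ witness.col (2 : Fin 4) (φ (1 : Fin 4)) := h.symm ▸ ((memCol 0 1 false).mpr (by decide))
    have key : ∀ y : Fin 4, true ∈ witness.col (2 : Fin 4) y → false ∈ witness.col (2 : Fin 4) y → False := by
      simp only [memCol]; decide
    exact key (φ (1 : Fin 4)) ht hf
end

section
/- For every site graph S₀, the encoding ρ(S₀) is a well-defined edge-coloured graph over the colour set C := P(S×S) ∪ N; in particular its colouring satisfies the rigidity condition: for each vertex, distinct outgoing edges of ρ(S₀) have distinct colours, and distinct incoming edges of ρ(S₀) have distinct colours. -/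
/-- A site graph: vertices `Fin n`, undirected edges given as two-element sets of
(vertex, site) pairs, and a protein naming. -/
structure SiteGraph (N S : Type) where
  n : ℕ
  edges : Set (Set (Fin n × S))
  names : Fin n → N

namespace SiteGraph

variable {N S : Type}

/-- Well-formedness of a site graph: every edge is a two-element set of
(vertex, site) pairs, distinct edges are disjoint, and the edge set is finite. -/
def Wf (S₀ : SiteGraph N S) : Prop :=
  (∀ e ∈ S₀.edges, ∃ p q : Fin S₀.n × S, p ≠ q ∧ e = {p, q}) ∧
  (∀ e ∈ S₀.edges, ∀ e' ∈ S₀.edges, e ≠ e' → e ∩ e' = ∅) ∧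
  S₀.edges.Finite

/-- `φ` is a site-graph isomorphism from `S₀` to `S₁`. -/
def IsSIso (S₀ S₁ : SiteGraph N S) (φ : Fin S₀.n ≃ Fin S₁.n) : Prop :=
  (∀ (v₁ v₂ : Fin S₀.n) (s₁ s₂ : S),
      ({(v₁, s₁), (v₂, s₂)} : Set (Fin S₀.n × S)) ∈ S₀.edges ↔
      ({(φ v₁, s₁), (φ v₂, s₂)} : Set (Fin S₁.n × S)) ∈ S₁.edges) ∧
  ∀ v : Fin S₀.n, S₀.names v = S₁.names (φ v)

/-- `S₀ ≅ S₁` as site graphs. -/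
def SIso (S₀ S₁ : SiteGraph N S) : Prop := ∃ φ, IsSIso S₀ S₁ φ

variable [LinearOrder S]

/-- The set of site pairs `(s,s')` with `{(v,s),(w,s')} ∈ E`. -/
def link (S₀ : SiteGraph N S) (v w : Fin S₀.n) : Set (S × S) :=
  {p | ({(v, p.1), (w, p.2)} : Set (Fin S₀.n × S)) ∈ S₀.edges}

/-- Strict lexicographic order on site pairs. -/
def lexLt (p q : S × S) : Prop := p.1 < q.1 ∨ (p.1 = q.1 ∧ p.2 < q.2)

/-- The directed edge relation of the encoding `ρ`: every loop `(v,v)` is an edge, and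
for `v ≠ w`, `(v,w)` is an edge iff the lexicographically least pair `(s,s')` with
`{(v,s),(w,s')} ∈ E` satisfies `s ≤ s'`. -/
def dirEdge (S₀ : SiteGraph N S) (v w : Fin S₀.n) : Prop :=
  v = w ∨ (v ≠ w ∧ ∃ p ∈ S₀.link v w,
    (∀ q ∈ S₀.link v w, p = q ∨ lexLt p q) ∧ p.1 ≤ p.2)

/-- The colour of the directed edge `(v,w)` in the encoding `ρ`: the set of site
pairs linking `v` to `w`, together with the protein name `ν(v)` if `v = w`. -/
def colourOf (S₀ : SiteGraph N S) (v w : Fin S₀.n) : Set ((S × S) ⊕ N) :=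
  (Sum.inl '' S₀.link v w) ∪ (if v = w then {Sum.inr (S₀.names v)} else ∅)

/-- The encoding `ρ` of site graphs into edge-coloured graphs over the colour set
consisting of sets of elements of `(S × S) ⊕ N`. -/
def rho (S₀ : SiteGraph N S) : ColGraph (Set ((S × S) ⊕ N)) where
  n := S₀.n
  col v w := {c | S₀.dirEdge v w ∧ c = S₀.colourOf v w}

end SiteGraph

theorem stmt_10 {N S : Type} [LinearOrder S] (S₀ : SiteGraph N S) (h : S₀.Wf) :
    (SiteGraph.rho S₀).Rigid := by
  obtain ⟨h1, h2, h3⟩ := h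
  have key : ∀ x z z' : Fin S₀.n × S, x ≠ z → x ≠ z' → z.1 ≠ z'.1 →
      ({x, z} : Set (Fin S₀.n × S)) ∈ S₀.edges →
      ({x, z'} : Set (Fin S₀.n × S)) ∈ S₀.edges → False := by
    intro x z z' hxz hxz' hzz' he he'
    have hne : ({x, z} : Set (Fin S₀.n × S)) ≠ {x, z'} := by
      intro hset
      have hz : z ∈ ({x, z'} : Set (Fin S₀.n × S)) := hset ▸ (by right; rfl)
      rcases hz with h | h
      · exact hxz h.symm
      · exact hzz' (by rw [h])
    have hx : x ∈ ({x, z} : Set (Fin S₀.n × S)) ∩ {x, z'} :=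
      ⟨by left; rfl, by left; rfl⟩
    rw [h2 _ he _ he' hne] at hx
    exact hx
  constructor
  · intro v w w' c hc hc'
    obtain ⟨hd, rfl⟩ := hc
    obtain ⟨hd', hcol⟩ := hc'
    by_contra hne
    have heq : S₀.colourOf v w = S₀.colourOf v w' := hcol
    rcases eq_or_ne v w with rfl | hvw
    · rcases eq_or_ne v w' with rfl | hvw'
      · exact hne rfl
      · have hm : (Sum.inr (S₀.names v) : (S × S) ⊕ N) ∈ S₀.colourOf v v := by
          simp [SiteGraph.colourOf]
          exact rfl
        rw [heq] at hm
        simp [SiteGraph.colourOf, hvw'] at hm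
        exact hvw' hm
    · rcases eq_or_ne v w' with rfl | hvw'
      · have hm : (Sum.inr (S₀.names v) : (S × S) ⊕ N) ∈ S₀.colourOf v v := by
          simp [SiteGraph.colourOf]
          exact rfl
        rw [← heq] at hm
        simp [SiteGraph.colourOf, hvw] at hm
        exact hvw hm
      · have hlink : S₀.link v w = S₀.link v w' := by
          have h5 : (Sum.inl '' S₀.link v w : Set ((S × S) ⊕ N)) =
              Sum.inl '' S₀.link v w' := by
            simpa [SiteGraph.colourOf, show ¬ @Eq (Fin S₀.n) v w from hvw, show ¬ @Eq (Fin S₀.n) v w' from hvw'] using heq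
          exact Set.image_injective.2 Sum.inl_injective h5
        rcases hd with rfl | ⟨_, p, hp, _, _⟩
        · exact hvw rfl
        have hp' : p ∈ S₀.link v w' := hlink ▸ hp
        exact key (v, p.1) (w, p.2) (w', p.2)
          (fun h => hvw (congrArg Prod.fst h)) (fun h => hvw' (congrArg Prod.fst h))
          hne hp hp'
  · intro v w w' c hc hc'
    obtain ⟨hd, rfl⟩ := hc
    obtain ⟨hd', hcol⟩ := hc'
    by_contra hne
    have heq : S₀.colourOf w v = S₀.colourOf w' v := hcol
    rcases eq_or_ne w v with rfl | hvw
    · rcases eq_or_ne w' w with rfl | hvw'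
      · exact hne rfl
      · have hm : (Sum.inr (S₀.names w) : (S × S) ⊕ N) ∈ S₀.colourOf w w := by
          simp [SiteGraph.colourOf]
          exact rfl
        rw [heq] at hm
        simp [SiteGraph.colourOf, hvw'] at hm
        exact hvw' hm.1
    · rcases eq_or_ne w' v with rfl | hvw'
      · have hm : (Sum.inr (S₀.names w') : (S × S) ⊕ N) ∈ S₀.colourOf w' w' := by
          simp [SiteGraph.colourOf]
          exact rfl
        rw [← heq] at hm
        simp [SiteGraph.colourOf, hvw] at hm
        exact hvw hm.1
      · have hlink : S₀.link w v = S₀.link w' v := by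
          have h5 : (Sum.inl '' S₀.link w v : Set ((S × S) ⊕ N)) =
              Sum.inl '' S₀.link w' v := by
            simpa [SiteGraph.colourOf, show ¬ @Eq (Fin S₀.n) w v from hvw, show ¬ @Eq (Fin S₀.n) w' v from hvw'] using heq
          exact Set.image_injective.2 Sum.inl_injective h5
        rcases hd with rfl | ⟨_, p, hp, _, _⟩
        · exact hvw rfl
        have hp' : p ∈ S₀.link w' v := hlink ▸ hp
        have hp2 : ({(v, p.2), (w, p.1)} : Set (Fin S₀.n × S)) ∈ S₀.edges := by
          have : ({(w, p.1), (v, p.2)} : Set (Fin S₀.n × S)) ∈ S₀.edges := hp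
          convert this using 1; exact Set.pair_comm _ _
        have hp2' : ({(v, p.2), (w', p.1)} : Set (Fin S₀.n × S)) ∈ S₀.edges := by
          have : ({(w', p.1), (v, p.2)} : Set (Fin S₀.n × S)) ∈ S₀.edges := hp'
          convert this using 1; exact Set.pair_comm _ _
        exact key (v, p.2) (w, p.1) (w', p.1)
          (fun h => hvw (congrArg Prod.fst h).symm) (fun h => hvw' (congrArg Prod.fst h).symm)
          hne hp2 hp2'
end

section
/- The encoding ρ from site graphs to edge-coloured graphs is injective: for all site graphs S₀ and S₁, if ρ(S₀) = ρ(S₁) then S₀ = S₁. -/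
namespace SiteGraph

variable {N S : Type} [LinearOrder S]

lemma link_swap (A : SiteGraph N S) (v w : Fin A.n) (p : S × S) :
    p ∈ A.link v w ↔ p.swap ∈ A.link w v := by
  simp only [link, Set.mem_setOf_eq, Prod.fst_swap, Prod.snd_swap, Set.pair_comm]

lemma link_finite (A : SiteGraph N S) (hA : A.Wf) {v w : Fin A.n} (hvw : v ≠ w) :
    (A.link v w).Finite := by
  apply Set.Finite.of_finite_image
    (f := fun p : S × S => ({(v, p.1), (w, p.2)} : Set (Fin A.n × S)))
  · exact hA.2.2.subset (by rintro _ ⟨p, hp, rfl⟩; exact hp)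
  · intro p hp q hq he
    have he' : ({(v, p.1), (w, p.2)} : Set (Fin A.n × S)) = {(v, q.1), (w, q.2)} := he
    have h1 : ((v, p.1) : Fin A.n × S) ∈ ({(v, q.1), (w, q.2)} : Set (Fin A.n × S)) := by
      rw [← he']; exact Set.mem_insert _ _
    have h2 : ((w, p.2) : Fin A.n × S) ∈ ({(v, q.1), (w, q.2)} : Set (Fin A.n × S)) := by
      rw [← he']; exact Set.mem_insert_of_mem _ rfl
    simp only [Set.mem_insert_iff, Set.mem_singleton_iff, Prod.mk.injEq] at h1 h2
    rcases h1 with ⟨-, h1⟩ | ⟨hb, -⟩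
    · rcases h2 with ⟨hb, -⟩ | ⟨-, h2⟩
      · exact absurd hb.symm hvw
      · exact Prod.ext h1 h2
    · exact absurd hb hvw

lemma exists_min (A : SiteGraph N S) (hA : A.Wf) {v w : Fin A.n} (hvw : v ≠ w)
    (hne : (A.link v w).Nonempty) :
    ∃ p ∈ A.link v w, ∀ q ∈ A.link v w, p = q ∨ lexLt p q := by
  obtain ⟨p, hp, hmin⟩ := Set.exists_min_image (A.link v w) (toLex : S × S → Lex (S × S))
    (A.link_finite hA hvw) hne
  refine ⟨p, hp, fun q hq => ?_⟩
  have hle := hmin q hq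
  rw [Prod.Lex.le_iff] at hle
  rcases hle with h | ⟨h1, h2⟩
  · exact Or.inr (Or.inl h)
  · rcases lt_or_eq_of_le h2 with h2 | h2
    · exact Or.inr (Or.inr ⟨h1, h2⟩)
    · exact Or.inl (Prod.ext h1 h2)

lemma dir_of_nonempty (A : SiteGraph N S) (hA : A.Wf) {v w : Fin A.n} (hvw : v ≠ w)
    (hne : (A.link v w).Nonempty) : A.dirEdge v w ∨ A.dirEdge w v := by
  obtain ⟨p, hp, hpm⟩ := A.exists_min hA hvw hne
  by_cases hp12 : p.1 ≤ p.2
  · exact Or.inl (Or.inr ⟨hvw, p, hp, hpm, hp12⟩)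
  obtain ⟨r, hr⟩ := hne
  have hne' : (A.link w v).Nonempty := ⟨r.swap, (A.link_swap v w r).mp hr⟩
  obtain ⟨q, hq, hqm⟩ := A.exists_min hA (Ne.symm hvw) hne'
  by_cases hq12 : q.1 ≤ q.2
  · exact Or.inr (Or.inr ⟨Ne.symm hvw, q, hq, hqm, hq12⟩)
  push_neg at hp12 hq12
  have hq' : q.swap ∈ A.link v w := (A.link_swap w v q).mp hq
  have hp' : p.swap ∈ A.link w v := (A.link_swap v w p).mp hp
  have h1 : p.1 ≤ q.2 := by
    rcases hpm q.swap hq' with h | h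
    · exact le_of_eq (congrArg Prod.fst h)
    · rcases h with h | ⟨h, _⟩
      · exact le_of_lt h
      · exact le_of_eq h
  have h2 : q.1 ≤ p.2 := by
    rcases hqm p.swap hp' with h | h
    · exact le_of_eq (congrArg Prod.fst h)
    · rcases h with h | ⟨h, _⟩
      · exact le_of_lt h
      · exact le_of_eq h
  exact absurd (((h1.trans_lt hq12).trans_le h2).trans hp12) (lt_irrefl _)

end SiteGraph

theorem stmt_11 {N S : Type} [LinearOrder S] (S₀ S₁ : SiteGraph N S)
    (h₀ : S₀.Wf) (h₁ : S₁.Wf)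
    (h : SiteGraph.rho S₀ = SiteGraph.rho S₁) : S₀ = S₁ := by
  obtain ⟨n₀, E₀, ν₀⟩ := S₀
  obtain ⟨n₁, E₁, ν₁⟩ := S₁
  have hn : n₀ = n₁ := congrArg ColGraph.n h
  subst hn
  set A : SiteGraph N S := ⟨n₀, E₀, ν₀⟩ with hAdef
  set B : SiteGraph N S := ⟨n₀, E₁, ν₁⟩ with hBdef
  -- extract equality of colour functions
  unfold SiteGraph.rho at h
  injection h with h1 h2
  have hcol : ∀ v w : Fin n₀,
      ({c | A.dirEdge v w ∧ c = A.colourOf v w} : Set (Set ((S × S) ⊕ N))) =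
      {c | B.dirEdge v w ∧ c = B.colourOf v w} :=
    fun v w => congrFun (congrFun h2 v) w
  -- one-directional transfer of colour information
  have key : ∀ v w : Fin n₀, A.dirEdge v w →
      B.dirEdge v w ∧ A.colourOf v w = B.colourOf v w := by
    intro v w hd
    have hm : A.colourOf v w ∈ ({c | A.dirEdge v w ∧ c = A.colourOf v w} :
        Set (Set ((S × S) ⊕ N))) := ⟨hd, rfl⟩
    rw [hcol v w] at hm
    exact ⟨hm.1, hm.2⟩
  have key' : ∀ v w : Fin n₀, B.dirEdge v w →
      A.dirEdge v w ∧ B.colourOf v w = A.colourOf v w := by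
    intro v w hd
    have hm : B.colourOf v w ∈ ({c | B.dirEdge v w ∧ c = B.colourOf v w} :
        Set (Set ((S × S) ⊕ N))) := ⟨hd, rfl⟩
    rw [← hcol v w] at hm
    exact ⟨hm.1, hm.2⟩
  -- colour equality at (v,w) gives link equality
  have colour_link : ∀ v w : Fin n₀, A.colourOf v w = B.colourOf v w →
      A.link v w = B.link v w := by
    intro v w hc
    ext p
    have := Set.ext_iff.mp hc (Sum.inl p)
    simpa [SiteGraph.colourOf] using this
  -- link equality everywhere
  have hlink : ∀ v w : Fin n₀, A.link v w = B.link v w := by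
    intro v w
    by_cases hvw : v = w
    · exact colour_link v w (key v w (Or.inl hvw)).2
    · ext p
      constructor
      · intro hp
        rcases A.dir_of_nonempty h₀ hvw ⟨p, hp⟩ with hd | hd
        · rw [← colour_link v w (key v w hd).2]; exact hp
        · have := colour_link w v (key w v hd).2
          rw [A.link_swap v w p, this, ← B.link_swap v w p] at hp
          exact hp
      · intro hp
        rcases B.dir_of_nonempty h₁ hvw ⟨p, hp⟩ with hd | hd
        · rw [← colour_link v w (key' v w hd).2.symm] at hp; exact hp
        · have := colour_link w v (key' w v hd).2.symm
          rw [B.link_swap v w p, ← this, ← A.link_swap v w p] at hp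
          exact hp
  -- names equality
  have hnames : ν₀ = ν₁ := by
    funext v
    have hc := (key v v (Or.inl rfl)).2
    have := Set.ext_iff.mp hc (Sum.inr (ν₀ v))
    simp only [SiteGraph.colourOf, if_pos rfl, Set.mem_union, Set.mem_image,
      Set.mem_singleton_iff] at this
    rcases this.mp (Or.inr rfl) with ⟨_, _, habs⟩ | heq
    · exact absurd habs (by simp)
    · exact Sum.inr.injEq _ _ ▸ (by injection heq)
  -- edges equality
  have hedges : E₀ = E₁ := by
    ext e
    constructor
    · intro he
      obtain ⟨⟨v, s⟩, ⟨w, s'⟩, hpq, rfl⟩ := h₀.1 e he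
      have hm : (s, s') ∈ A.link v w := he
      rw [hlink v w] at hm
      exact hm
    · intro he
      obtain ⟨⟨v, s⟩, ⟨w, s'⟩, hpq, rfl⟩ := h₁.1 e he
      have hm : (s, s') ∈ B.link v w := he
      rw [← hlink v w] at hm
      exact hm
  simp only [hAdef, hBdef]
  rw [hedges, hnames]
end

section
/- Let S₀ and S₁ be site graphs and let φ be a site-graph isomorphism from S₀ to S₁. Then the same bijection φ is an isomorphism of edge-coloured graphs from ρ(S₀) to ρ(S₁). -/
theorem stmt_12 {N S : Type} [LinearOrder S] (S₀ S₁ : SiteGraph N S)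
    (h₀ : S₀.Wf) (h₁ : S₁.Wf)
    (φ : Fin S₀.n ≃ Fin S₁.n) (hφ : SiteGraph.IsSIso S₀ S₁ φ) :
    ColGraph.IsIso (SiteGraph.rho S₀) (SiteGraph.rho S₁) φ := by
  intro (v : Fin S₀.n) (w : Fin S₀.n)
  have hlink : S₁.link (φ v) (φ w) = S₀.link v w := by
    ext p; exact (hφ.1 v w p.1 p.2).symm
  have heq : (φ v = φ w) ↔ (v = w) := φ.injective.eq_iff
  have hcol : S₁.colourOf (φ v) (φ w) = S₀.colourOf v w := by
    unfold SiteGraph.colourOf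
    rw [hlink, ← hφ.2 v]
    by_cases h : v = w
    · simp [h, heq.mpr h]
    · simp [h, fun hc => h (heq.mp hc)]
  have hdir : S₁.dirEdge (φ v) (φ w) ↔ S₀.dirEdge v w := by
    unfold SiteGraph.dirEdge
    rw [hlink]; simp only [Ne, heq]
  ext c
  simp only [SiteGraph.rho, Set.mem_setOf_eq, hdir, hcol]
  exact and_congr hdir (iff_of_eq (congrArg (c = ·) hcol))
end

section
/- For every site graph S₀, the encoding has linear size: the vertex set of ρ(S₀) equals the vertex set of S₀, and the number of directed edges of ρ(S₀) satisfies |E_{ρ(S₀)}| ≤ |V_{S₀}| + 2·|E_{S₀}|. -/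
theorem stmt_14 {N S : Type} [LinearOrder S] (S₀ : SiteGraph N S) (h : S₀.Wf) :
    (SiteGraph.rho S₀).n = S₀.n ∧
    {e : Fin (SiteGraph.rho S₀).n × Fin (SiteGraph.rho S₀).n |
        ((SiteGraph.rho S₀).col e.1 e.2).Nonempty}.ncard
      ≤ S₀.n + 2 * S₀.edges.ncard := by
  classical
  refine ⟨rfl, ?_⟩
  set D := {e : Fin (SiteGraph.rho S₀).n × Fin (SiteGraph.rho S₀).n |
      ((SiteGraph.rho S₀).col e.1 e.2).Nonempty} with hDdef
  have hDmem : ∀ e : Fin S₀.n × Fin S₀.n, e ∈ D ↔ S₀.dirEdge e.1 e.2 := by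
    intro e
    constructor
    · rintro ⟨c, hc, _⟩; exact hc
    · intro hd; exact ⟨S₀.colourOf e.1 e.2, hd, rfl⟩
  set L : Set (Fin S₀.n × Fin S₀.n) := D ∩ {e | e.1 = e.2} with hL
  set M : Set (Fin S₀.n × Fin S₀.n) := D ∩ {e | e.1 ≠ e.2} with hM
  have hDLM : D = L ∪ M := by
    ext e
    simp only [hL, hM, Set.mem_union, Set.mem_inter_iff, Set.mem_setOf_eq]
    show e ∈ D ↔ (e ∈ D ∧ e.1 = e.2) ∨ (e ∈ D ∧ e.1 ≠ e.2)
    tauto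
  have hLcard : L.ncard ≤ S₀.n := by
    have h1 : L.ncard ≤ (Set.univ : Set (Fin S₀.n)).ncard := by
      apply Set.ncard_le_ncard_of_injOn (fun e => e.1)
      · intro a _; exact Set.mem_univ _
      · intro a ha b hb hab
        have ha' : a.1 = a.2 := ha.2
        have hb' : b.1 = b.2 := hb.2
        exact Prod.ext hab (by rw [← ha', ← hb']; exact hab)
    simpa [Set.ncard_univ] using h1
  -- map for non-loop edges
  set f : Fin S₀.n × Fin S₀.n → Set (Fin S₀.n × S) × Bool := fun e =>
    (if hx : ∃ p, p ∈ S₀.link e.1 e.2 then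
        ({(e.1, hx.choose.1), (e.2, hx.choose.2)} : Set (Fin S₀.n × S)) else ∅,
      decide (e.1 < e.2)) with hf
  set T : Set (Set (Fin S₀.n × S) × Bool) :=
  ((fun e => (e, true)) '' S₀.edges) ∪ ((fun e => (e, false)) '' S₀.edges) with hT
  have hTfin : T.Finite := (h.2.2.image _).union (h.2.2.image _)
  have hmaps : ∀ e ∈ M, f e ∈ T := by
    rintro ⟨v, w⟩ ⟨hd, hvw⟩
    have hd' := (hDmem (v, w)).1 hd
    rcases hd' with heq | ⟨_, p, hp, _, _⟩
    · exact absurd heq hvw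
    · have hx : ∃ q, q ∈ S₀.link v w := ⟨p, hp⟩
      have hedge : ({(v, hx.choose.1), (w, hx.choose.2)} : Set (Fin S₀.n × S)) ∈ S₀.edges :=
        hx.choose_spec
      simp only [hf, hT, dif_pos hx]
      by_cases hlt : v < w
      · left; exact ⟨_, hedge, by simp [hlt]⟩
      · right; exact ⟨_, hedge, by simp [hlt]⟩
  have hinj : Set.InjOn f M := by
    rintro ⟨v, w⟩ ⟨hd, hvw⟩ ⟨v', w'⟩ ⟨hd', hvw'⟩ hfe
    simp only [Set.mem_setOf_eq] at hvw hvw'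
    have hx : ∃ q, q ∈ S₀.link v w := by
      rcases (hDmem (v, w)).1 hd with heq | ⟨_, p, hp, _, _⟩
      · exact absurd heq hvw
      · exact ⟨p, hp⟩
    have hx' : ∃ q, q ∈ S₀.link v' w' := by
      rcases (hDmem (v', w')).1 hd' with heq | ⟨_, p, hp, _, _⟩
      · exact absurd heq hvw'
      · exact ⟨p, hp⟩
    simp only [hf, dif_pos hx, dif_pos hx', Prod.mk.injEq] at hfe
    obtain ⟨hset, hbool⟩ := hfe
    have h1 : ((v, hx.choose.1) : Fin S₀.n × S) ∈
        ({(v', hx'.choose.1), (w', hx'.choose.2)} : Set (Fin S₀.n × S)) := by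
      rw [← hset]; exact Set.mem_insert _ _
    have h2 : ((w, hx.choose.2) : Fin S₀.n × S) ∈
        ({(v', hx'.choose.1), (w', hx'.choose.2)} : Set (Fin S₀.n × S)) := by
      rw [← hset]; exact Set.mem_insert_of_mem _ rfl
    simp only [Set.mem_insert_iff, Set.mem_singleton_iff, Prod.mk.injEq] at h1 h2
    rcases h1 with ⟨hv, _⟩ | ⟨hv, _⟩ <;> rcases h2 with ⟨hw, _⟩ | ⟨hw, _⟩
    · exact absurd (hv.trans hw.symm) hvw
    · exact Prod.ext hv hw
    · -- v = w', w = v' : contradiction with bool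
      exfalso
      subst hv; subst hw
      rcases lt_or_gt_of_ne hvw with hlt | hgt
      · simp [hlt, not_lt_of_gt hlt] at hbool
      · simp [hgt, not_lt_of_gt hgt] at hbool
    · exact absurd (hw.trans hv.symm) (Ne.symm hvw)
  have hMcard : M.ncard ≤ 2 * S₀.edges.ncard := by
    have h1 : M.ncard ≤ T.ncard := Set.ncard_le_ncard_of_injOn f hmaps hinj hTfin
    have h2 : T.ncard ≤ S₀.edges.ncard + S₀.edges.ncard := by
      refine le_trans (Set.ncard_union_le _ _) ?_
      exact Nat.add_le_add (Set.ncard_image_le h.2.2) (Set.ncard_image_le h.2.2)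
    omega
  calc D.ncard ≤ L.ncard + M.ncard := by
        rw [hDLM]; exact Set.ncard_union_le _ _
    _ ≤ S₀.n + 2 * S₀.edges.ncard := Nat.add_le_add hLcard hMcard
end

section
/- Let L be a canonical labeller on edge-coloured graphs over the colour set C := P(S×S) ∪ N, i.e., L(G) ≅ G for every edge-coloured graph G, and L(G) = L(G') if and only if G ≅ G', for all edge-coloured graphs G, G'. Then: (i) for every site graph S₀ there is a unique site graph, denoted L*(S₀), with ρ(L*(S₀)) = L(ρ(S₀)); and (ii) the resulting map L* is a canonical labeller on site graphs, i.e., L*(S₀) ≅ S₀ for every site graph S₀, and L*(S₀) = L*(S₁) if and only if S₀ ≅ S₁, for all site graphs S₀, S₁. -/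
namespace SiteGraph

variable {N S : Type} [LinearOrder S]

theorem mem_link {S₀ : SiteGraph N S} {v w : Fin S₀.n} {s s' : S} :
    (s, s') ∈ S₀.link v w ↔ ({(v, s), (w, s')} : Set (Fin S₀.n × S)) ∈ S₀.edges := Iff.rfl

theorem link_symm {S₀ : SiteGraph N S} {v w : Fin S₀.n} {s s' : S} :
    (s, s') ∈ S₀.link v w ↔ (s', s) ∈ S₀.link w v := by
  rw [mem_link, mem_link, Set.pair_comm]

theorem mem_col {S₀ : SiteGraph N S} {v w : Fin S₀.n} {c : Set ((S × S) ⊕ N)} :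
    c ∈ (S₀.rho).col v w ↔ S₀.dirEdge v w ∧ c = S₀.colourOf v w := Iff.rfl

theorem colourOf_ne {S₀ : SiteGraph N S} {v w : Fin S₀.n} (hvw : v ≠ w) :
    S₀.colourOf v w = Sum.inl '' S₀.link v w := by
  simp [colourOf, hvw]

theorem inr_mem_colourOf_self {S₀ : SiteGraph N S} (v : Fin S₀.n) :
    Sum.inr (S₀.names v) ∈ S₀.colourOf v v := by simp [colourOf]

theorem inl_mem_colourOf {S₀ : SiteGraph N S} {v w : Fin S₀.n} {p : S × S} :
    Sum.inl p ∈ S₀.colourOf v w ↔ p ∈ S₀.link v w := by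
  unfold colourOf
  split_ifs <;> simp

theorem link_finite_s15 {S₀ : SiteGraph N S} (h : S₀.Wf) {v w : Fin S₀.n} (hvw : v ≠ w) :
    (S₀.link v w).Finite := by
  apply Set.Finite.of_finite_image
    (f := fun p : S × S => ({(v, p.1), (w, p.2)} : Set (Fin S₀.n × S)))
  · apply h.2.2.subset
    rintro e ⟨p, hp, rfl⟩
    exact hp
  · intro p hp q hq heq
    rcases Set.pair_eq_pair_iff.mp heq with ⟨h1, h2⟩ | ⟨h1, h2⟩
    · injection h1 with ha hb
      injection h2 with hc hd
      exact Prod.ext hb hd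
    · injection h1 with ha hb
      exact absurd ha hvw

theorem exists_least {A : Set (S × S)} (hA : A.Finite) (hne : A.Nonempty) :
    ∃ p ∈ A, ∀ q ∈ A, p = q ∨ lexLt p q := by
  classical
  let B : Finset (S ×ₗ S) := hA.toFinset.image toLex
  have hB : B.Nonempty := hne.elim fun p hp =>
    ⟨toLex p, Finset.mem_image_of_mem _ (hA.mem_toFinset.mpr hp)⟩
  obtain ⟨p', hp'1, hp'2⟩ := Finset.mem_image.mp (B.min'_mem hB)
  refine ⟨p', hA.mem_toFinset.mp hp'1, fun q hq => ?_⟩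
  have hle : toLex p' ≤ toLex q := by
    rw [hp'2]
    exact B.min'_le _ (Finset.mem_image_of_mem _ (hA.mem_toFinset.mpr hq))
  rcases lt_or_eq_of_le hle with hlt | heq
  · exact Or.inr (Prod.Lex.lt_iff.mp hlt)
  · exact Or.inl (toLex.injective heq)

theorem dirEdge_or {S₀ : SiteGraph N S} (h : S₀.Wf) {v w : Fin S₀.n} (hvw : v ≠ w)
    (hne : (S₀.link v w).Nonempty) : S₀.dirEdge v w ∨ S₀.dirEdge w v := by
  obtain ⟨p, hp, hpmin⟩ := exists_least (link_finite_s15 h hvw) hne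
  by_cases h1 : p.1 ≤ p.2
  · exact Or.inl (Or.inr ⟨hvw, p, hp, hpmin, h1⟩)
  · push_neg at h1
    have hp' : (p.2, p.1) ∈ S₀.link w v := link_symm.mp hp
    obtain ⟨q, hq, hqmin⟩ := exists_least (link_finite_s15 h (Ne.symm hvw)) ⟨_, hp'⟩
    by_cases h2 : q.1 ≤ q.2
    · exact Or.inr (Or.inr ⟨Ne.symm hvw, q, hq, hqmin, h2⟩)
    · push_neg at h2
      exfalso
      have hq' : (q.2, q.1) ∈ S₀.link v w := link_symm.mpr hq
      have h3 : p.1 ≤ q.2 := by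
        rcases hpmin _ hq' with heq | hlt
        · exact le_of_eq (congrArg Prod.fst heq)
        · rcases hlt with hlt | ⟨heq, _⟩
          · exact le_of_lt hlt
          · exact le_of_eq heq
      have h4 : q.1 ≤ p.2 := by
        rcases hqmin _ hp' with heq | hlt
        · exact le_of_eq (congrArg Prod.fst heq)
        · rcases hlt with hlt | ⟨heq, _⟩
          · exact le_of_lt hlt
          · exact le_of_eq heq
      exact absurd (lt_trans (lt_of_le_of_lt h3 h2) (lt_of_le_of_lt h4 h1)) (lt_irrefl _)

theorem rho_rigid {S₀ : SiteGraph N S} (h : S₀.Wf) : (S₀.rho).Rigid := by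
  constructor
  · rintro v w w' c ⟨hd, rfl⟩ ⟨hd', hc⟩
    by_contra hww'
    by_cases hvw : v = w
    · subst hvw
      by_cases hvw' : v = w'
      · exact hww' hvw'
      · have h1 := inr_mem_colourOf_self (S₀ := S₀) v
        rw [hc, colourOf_ne hvw'] at h1
        obtain ⟨p, _, hp⟩ := h1
        exact Sum.inl_ne_inr hp
    · by_cases hvw' : v = w'
      · subst hvw'
        have h1 := inr_mem_colourOf_self (S₀ := S₀) v
        rw [← hc, colourOf_ne hvw] at h1
        obtain ⟨p, _, hp⟩ := h1
        exact Sum.inl_ne_inr hp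
      · rcases hd with rfl | ⟨_, p, hp, _⟩
        · exact hvw rfl
        · have hp' : p ∈ S₀.link v w' := by
            have h1 : Sum.inl p ∈ S₀.colourOf v w' := by
              rw [← hc]
              exact inl_mem_colourOf.mpr hp
            exact inl_mem_colourOf.mp h1
          have hne : ({(v, p.1), (w, p.2)} : Set (Fin S₀.n × S)) ≠ {(v, p.1), (w', p.2)} := by
            intro heq
            have h2 : (w, p.2) ∈ ({(v, p.1), (w', p.2)} : Set (Fin S₀.n × S)) := by
              rw [← heq]; exact Set.mem_insert_of_mem _ rfl
            rcases h2 with h2 | h2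
            · injection h2 with ha _; exact hvw ha.symm
            · injection h2 with ha _; exact hww' ha
          have hdisj := h.2.1 _ hp _ hp' hne
          have h3 : (v, p.1) ∈ (∅ : Set (Fin S₀.n × S)) := by
            rw [← hdisj]
            exact ⟨Set.mem_insert _ _, Set.mem_insert _ _⟩
          exact h3
  · rintro v w w' c ⟨hd, rfl⟩ ⟨hd', hc⟩
    by_contra hww'
    by_cases hwv : w = v
    · subst hwv
      by_cases hwv' : w' = w
      · exact hww' hwv'.symm
      · have h1 := inr_mem_colourOf_self (S₀ := S₀) w
        rw [hc, colourOf_ne hwv'] at h1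
        obtain ⟨p, _, hp⟩ := h1
        exact Sum.inl_ne_inr hp
    · by_cases hwv' : w' = v
      · subst hwv'
        have h1 := inr_mem_colourOf_self (S₀ := S₀) w'
        rw [← hc, colourOf_ne hwv] at h1
        obtain ⟨p, _, hp⟩ := h1
        exact Sum.inl_ne_inr hp
      · rcases hd with heq | ⟨_, p, hp, _⟩
        · exact hwv heq
        · have hp' : p ∈ S₀.link w' v := by
            have h1 : Sum.inl p ∈ S₀.colourOf w' v := by
              rw [← hc]
              exact inl_mem_colourOf.mpr hp
            exact inl_mem_colourOf.mp h1
          have hne : ({(w, p.1), (v, p.2)} : Set (Fin S₀.n × S)) ≠ {(w', p.1), (v, p.2)} := by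
            intro heq
            have h2 : (w, p.1) ∈ ({(w', p.1), (v, p.2)} : Set (Fin S₀.n × S)) := by
              rw [← heq]; exact Set.mem_insert _ _
            rcases h2 with h2 | h2
            · injection h2 with ha _; exact hww' ha
            · injection h2 with ha _; exact hwv ha
          have hdisj := h.2.1 _ hp _ hp' hne
          have h3 : (v, p.2) ∈ (∅ : Set (Fin S₀.n × S)) := by
            rw [← hdisj]
            exact ⟨Set.mem_insert_of_mem _ rfl, Set.mem_insert_of_mem _ rfl⟩
          exact h3

theorem link_map {S₀ S₁ : SiteGraph N S} {φ : Fin S₀.n ≃ Fin S₁.n} (hφ : IsSIso S₀ S₁ φ)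
    (v w : Fin S₀.n) : S₁.link (φ v) (φ w) = S₀.link v w := by
  ext ⟨s, s'⟩
  exact (hφ.1 v w s s').symm

theorem col_map {S₀ S₁ : SiteGraph N S} {φ : Fin S₀.n ≃ Fin S₁.n} (hφ : IsSIso S₀ S₁ φ)
    (v w : Fin S₀.n) : (S₁.rho).col (φ v) (φ w) = (S₀.rho).col v w := by
  have hl := link_map hφ
  have hco : S₁.colourOf (φ v) (φ w) = S₀.colourOf v w := by
    by_cases hvw : v = w
    · subst hvw
      unfold colourOf
      rw [hl, if_pos rfl, if_pos rfl, ← hφ.2 v]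
    · rw [colourOf_ne (fun hcon => hvw (φ.injective hcon)), colourOf_ne hvw, hl]
  have hde : S₁.dirEdge (φ v) (φ w) ↔ S₀.dirEdge v w := by
    unfold dirEdge
    rw [hl]
    constructor
    · rintro (heq | ⟨hne, hp⟩)
      · exact Or.inl (φ.injective heq)
      · exact Or.inr ⟨fun hcon => hne (congrArg φ hcon), hp⟩
    · rintro (rfl | ⟨hne, hp⟩)
      · exact Or.inl rfl
      · exact Or.inr ⟨fun hcon => hne (φ.injective hcon), hp⟩
  ext c
  rw [mem_col, mem_col, hco, hde]

theorem link_names_of_col {S₀ S₁ : SiteGraph N S} (h₀ : S₀.Wf) (h₁ : S₁.Wf)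
    (φ : Fin S₀.n ≃ Fin S₁.n)
    (hcol : ∀ v w : Fin S₀.n, (S₁.rho).col (φ v) (φ w) = (S₀.rho).col v w) :
    (∀ v w : Fin S₀.n, S₁.link (φ v) (φ w) = S₀.link v w) ∧
    (∀ v : Fin S₀.n, S₁.names (φ v) = S₀.names v) := by
  have hcoeq : ∀ v w, S₀.dirEdge v w → S₁.colourOf (φ v) (φ w) = S₀.colourOf v w := by
    intro v w hd
    have h1 : S₀.colourOf v w ∈ (S₁.rho).col (φ v) (φ w) := by
      rw [hcol]; exact ⟨hd, rfl⟩
    exact (mem_col.mp h1).2.symm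
  have hde : ∀ v w, S₀.dirEdge v w ↔ S₁.dirEdge (φ v) (φ w) := by
    intro v w
    constructor
    · intro hd
      have h1 : S₀.colourOf v w ∈ (S₁.rho).col (φ v) (φ w) := by
        rw [hcol]; exact ⟨hd, rfl⟩
      exact (mem_col.mp h1).1
    · intro hd
      have h1 : S₁.colourOf (φ v) (φ w) ∈ (S₀.rho).col v w := by
        rw [← hcol]; exact ⟨hd, rfl⟩
      exact (mem_col.mp h1).1
  have hnames : ∀ v, S₁.names (φ v) = S₀.names v := by
    intro v
    have h1 := inr_mem_colourOf_self (S₀ := S₁) (φ v)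
    rw [hcoeq v v (Or.inl rfl)] at h1
    unfold colourOf at h1
    rcases h1 with ⟨p, _, hp⟩ | h1
    · exact absurd hp Sum.inl_ne_inr
    · rw [if_pos rfl] at h1
      exact Sum.inr_injective h1
  have hlink1 : ∀ v w, S₀.dirEdge v w → S₁.link (φ v) (φ w) = S₀.link v w := by
    intro v w hd
    ext p
    rw [← inl_mem_colourOf (S₀ := S₁), ← inl_mem_colourOf (S₀ := S₀), hcoeq v w hd]
  refine ⟨fun v w => ?_, hnames⟩
  by_cases hvw : v = w
  · exact hlink1 v w (Or.inl hvw)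
  · by_cases hd : S₀.dirEdge v w
    · exact hlink1 v w hd
    · by_cases hd' : S₀.dirEdge w v
      · have h2 := hlink1 w v hd'
        ext ⟨s, s'⟩
        rw [link_symm, h2]
        exact link_symm.symm
      · have e0 : S₀.link v w = ∅ := by
          by_contra hne
          rcases dirEdge_or h₀ hvw (Set.nonempty_iff_ne_empty.mpr hne) with hh | hh
          · exact hd hh
          · exact hd' hh
        have hφvw : φ v ≠ φ w := fun hcon => hvw (φ.injective hcon)
        have e1 : S₁.link (φ v) (φ w) = ∅ := by
          by_contra hne
          rcases dirEdge_or h₁ hφvw (Set.nonempty_iff_ne_empty.mpr hne) with hh | hh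
          · exact hd ((hde v w).mpr hh)
          · exact hd' ((hde w v).mpr hh)
        rw [e0, e1]

theorem sIso_of_col {S₀ S₁ : SiteGraph N S} (h₀ : S₀.Wf) (h₁ : S₁.Wf)
    (φ : Fin S₀.n ≃ Fin S₁.n)
    (hcol : ∀ v w : Fin S₀.n, (S₁.rho).col (φ v) (φ w) = (S₀.rho).col v w) :
    IsSIso S₀ S₁ φ := by
  obtain ⟨hlink, hnames⟩ := link_names_of_col h₀ h₁ φ hcol
  refine ⟨fun v₁ v₂ s₁ s₂ => ?_, fun v => (hnames v).symm⟩
  rw [← mem_link, ← mem_link, hlink]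

theorem mem_edges_iff {S₀ : SiteGraph N S} (h : S₀.Wf) {e : Set (Fin S₀.n × S)} :
    e ∈ S₀.edges ↔ ∃ v w s s', (s, s') ∈ S₀.link v w ∧ e = {(v, s), (w, s')} := by
  constructor
  · intro he
    obtain ⟨p, q, hpq, rfl⟩ := h.1 e he
    exact ⟨p.1, q.1, p.2, q.2, he, rfl⟩
  · rintro ⟨v, w, s, s', hl, rfl⟩
    exact hl

theorem rho_inj {T T' : SiteGraph N S} (hT : T.Wf) (hT' : T'.Wf)
    (h : T.rho = T'.rho) : T = T' := by
  obtain ⟨n, E, ν⟩ := T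
  obtain ⟨n', E', ν'⟩ := T'
  have hn : n = n' := congrArg ColGraph.n h
  subst hn
  have hheq : HEq (SiteGraph.rho ⟨n, E, ν⟩).col (SiteGraph.rho ⟨n, E', ν'⟩).col := by rw [h]
  have hcoleq : (SiteGraph.rho ⟨n, E, ν⟩).col = (SiteGraph.rho ⟨n, E', ν'⟩).col := eq_of_heq hheq
  have hcol : ∀ v w : Fin n,
      (SiteGraph.rho ⟨n, E', ν'⟩).col v w = (SiteGraph.rho ⟨n, E, ν⟩).col v w := by
    intro v w; rw [hcoleq]
  obtain ⟨hlink, hnames⟩ := link_names_of_col hT hT' (Equiv.refl (Fin n)) hcol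
  have hlink' : ∀ v w : Fin n,
      SiteGraph.link ⟨n, E', ν'⟩ v w = SiteGraph.link ⟨n, E, ν⟩ v w := hlink
  have hnames' : ∀ v : Fin n, ν' v = ν v := hnames
  have hE : E = E' := by
    ext e
    rw [show E = SiteGraph.edges ⟨n, E, ν⟩ from rfl, show E' = SiteGraph.edges ⟨n, E', ν'⟩ from rfl,
      mem_edges_iff hT, mem_edges_iff hT']
    simp only [hlink']
  have hν : ν = ν' := funext fun v => (hnames' v).symm
  rw [hE, hν]

theorem exists_decode {S₀ : SiteGraph N S} (h₀ : S₀.Wf) (G : ColGraph (Set ((S × S) ⊕ N)))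
    (hG : ColGraph.Iso G S₀.rho) :
    ∃ T : SiteGraph N S, T.Wf ∧ T.rho = G := by
  obtain ⟨m, colG⟩ := G
  obtain ⟨φ, hφ⟩ := hG
  set T : SiteGraph N S :=
    ⟨m, {e | ∃ v w s s', (s, s') ∈ S₀.link (φ v) (φ w) ∧ e = {(v, s), (w, s')}},
      fun v => S₀.names (φ v)⟩ with hTdef
  have hψ : Function.Injective (fun p : Fin m × S => ((φ p.1, p.2) : Fin S₀.n × S)) := by
    intro p q hpq
    injection hpq with ha hb
    exact Prod.ext (φ.injective ha) hb
  have hiso : IsSIso T S₀ φ := by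
    refine ⟨fun v₁ v₂ s₁ s₂ => ?_, fun v => rfl⟩
    constructor
    · rintro ⟨v, w, s, s', hl, he⟩
      rcases Set.pair_eq_pair_iff.mp he with ⟨h1, h2⟩ | ⟨h1, h2⟩
      · injection h1 with ha hb; injection h2 with hc hd
        subst ha; subst hb; subst hc; subst hd
        exact hl
      · injection h1 with ha hb; injection h2 with hc hd
        subst ha; subst hb; subst hc; subst hd
        rw [Set.pair_comm]
        exact hl
    · intro hmem
      exact ⟨v₁, v₂, s₁, s₂, hmem, rfl⟩
  have hwf : T.Wf := by
    refine ⟨?_, ?_, ?_⟩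
    · rintro e ⟨v, w, s, s', hl, rfl⟩
      refine ⟨(v, s), (w, s'), ?_, rfl⟩
      intro hc
      have hc' : ((φ v, s) : Fin S₀.n × S) = (φ w, s') := by
        injection hc with ha hb
        rw [ha, hb]
        rfl
      obtain ⟨p, q, hpq, hE⟩ := h₀.1 _ hl
      rcases Set.pair_eq_pair_iff.mp hE with ⟨h1, h2⟩ | ⟨h1, h2⟩
      · exact hpq (h1.symm.trans (hc'.trans h2))
      · exact hpq (h2.symm.trans (hc'.symm.trans h1))
    · rintro e ⟨v, w, s, s', hl, rfl⟩ e' ⟨v', w', t, t', hl', rfl⟩ hne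
      have him : (fun p : Fin m × S => ((φ p.1, p.2) : Fin S₀.n × S)) ''
          {(v, s), (w, s')} = {(φ v, s), (φ w, s')} := by
        rw [Set.image_pair]
        rfl
      have him' : (fun p : Fin m × S => ((φ p.1, p.2) : Fin S₀.n × S)) ''
          {(v', t), (w', t')} = {(φ v', t), (φ w', t')} := by
        rw [Set.image_pair]
        rfl
      have hneq : ({(φ v, s), (φ w, s')} : Set (Fin S₀.n × S)) ≠ {(φ v', t), (φ w', t')} := by
        intro hc
        exact hne (Set.image_injective.mpr hψ (him.trans (hc.trans him'.symm)))
      have hdisj := h₀.2.1 _ hl _ hl' hneq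
      ext x
      simp only [Set.mem_inter_iff, Set.mem_empty_iff_false, iff_false]
      rintro ⟨hx1, hx2⟩
      have hx : ((φ x.1, x.2) : Fin S₀.n × S) ∈
          ({(φ v, s), (φ w, s')} : Set (Fin S₀.n × S)) ∩ {(φ v', t), (φ w', t')} := by
        constructor
        · rw [← him]; exact Set.mem_image_of_mem _ hx1
        · rw [← him']; exact Set.mem_image_of_mem _ hx2
      have hx := hdisj.subset hx
      exact hx
    · apply Set.Finite.of_finite_image
        (f := Set.image (fun p : Fin m × S => ((φ p.1, p.2) : Fin S₀.n × S)))
      · apply h₀.2.2.subset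
        rintro E ⟨e, ⟨v, w, s, s', hl, rfl⟩, rfl⟩
        rw [Set.image_pair]
        exact hl
      · exact fun a _ b _ hab => Set.image_injective.mpr hψ hab
  refine ⟨T, hwf, ?_⟩
  have hcols : ∀ v w : Fin m, (T.rho).col v w = colG v w := fun v w =>
    (col_map hiso v w).symm.trans (hφ v w)
  calc T.rho = ⟨m, T.rho.col⟩ := rfl
    _ = ⟨m, colG⟩ := congrArg _ (funext fun v => funext fun w => hcols v w)

end SiteGraph

theorem stmt_15 {N S : Type} [LinearOrder S]
    (L : ColGraph (Set ((S × S) ⊕ N)) → ColGraph (Set ((S × S) ⊕ N)))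
    (hL1 : ∀ G, G.Rigid → ColGraph.Iso (L G) G)
    (hL2 : ∀ G G', G.Rigid → G'.Rigid → (L G = L G' ↔ ColGraph.Iso G G')) :
    (∀ S₀ : SiteGraph N S, S₀.Wf →
      ∃! T : SiteGraph N S, T.Wf ∧ SiteGraph.rho T = L (SiteGraph.rho S₀)) ∧
    (∀ Ls : SiteGraph N S → SiteGraph N S,
      (∀ S₀ : SiteGraph N S, S₀.Wf →
          (Ls S₀).Wf ∧ SiteGraph.rho (Ls S₀) = L (SiteGraph.rho S₀)) →
      (∀ S₀ : SiteGraph N S, S₀.Wf → SiteGraph.SIso (Ls S₀) S₀) ∧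
      (∀ S₀ S₁ : SiteGraph N S, S₀.Wf → S₁.Wf →
          (Ls S₀ = Ls S₁ ↔ SiteGraph.SIso S₀ S₁))) := by
  constructor
  · intro S₀ h₀
    obtain ⟨T, hTwf, hT⟩ := SiteGraph.exists_decode h₀ (L S₀.rho)
      (hL1 _ (SiteGraph.rho_rigid h₀))
    refine ⟨T, ⟨hTwf, hT⟩, ?_⟩
    rintro T' ⟨hT'wf, hT'⟩
    exact SiteGraph.rho_inj hT'wf hTwf (hT'.trans hT.symm)
  · intro Ls hLs
    constructor
    · intro S₀ h₀
      obtain ⟨hwf, hρ⟩ := hLs S₀ h₀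
      have hiso := hL1 S₀.rho (SiteGraph.rho_rigid h₀)
      rw [← hρ] at hiso
      obtain ⟨φ, hφ⟩ := hiso
      exact ⟨φ, SiteGraph.sIso_of_col hwf h₀ φ hφ⟩
    · intro S₀ S₁ h₀ h₁
      obtain ⟨hw0, hρ0⟩ := hLs S₀ h₀
      obtain ⟨hw1, hρ1⟩ := hLs S₁ h₁
      constructor
      · intro heq
        have hLeq : L S₀.rho = L S₁.rho := by rw [← hρ0, ← hρ1, heq]
        obtain ⟨φ, hφ⟩ := (hL2 _ _ (SiteGraph.rho_rigid h₀) (SiteGraph.rho_rigid h₁)).mp hLeq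
        exact ⟨φ, SiteGraph.sIso_of_col h₀ h₁ φ hφ⟩
      · rintro ⟨φ, hφ⟩
        have hgi : ColGraph.Iso S₀.rho S₁.rho := ⟨φ, fun v w => SiteGraph.col_map hφ v w⟩
        have hLeq := (hL2 _ _ (SiteGraph.rho_rigid h₀) (SiteGraph.rho_rigid h₁)).mpr hgi
        exact SiteGraph.rho_inj hw0 hw1 (by rw [hρ0, hρ1, hLeq])
end
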